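/- arXiv:1604.07333 — 4 statements merged into one kernel-verified Lean document; each statement's English description precedes it below -/
import Mathlib

section
/- Let 𝔪 be a finite multiset of segments with width ω(𝔪) = k, and let Δ₁ ⊆ ⋯ ⊆ Δ_k be a maximal nested chain contained in 𝔪 (which exists by Dilworth's theorem). Let S = {Δ : Δᵢ ⪯' Δ for some 1 ≤ i ≤ k}. Set 𝔪₁ = the restriction of 𝔪 − (Δ₁+⋯+Δ_k) to S, and 𝔪₂ = the restriction of 𝔪 − (Δ₁+⋯+Δ_k) to the complement of S. Then for every segment Δ in the support of 𝔪 − 𝔪₂ and every Δ' in the support of 𝔪 − 𝔪₁, we have Δ ⊀ Δ'. -/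
/-- A segment is a pair of integers `(a,b)` with `a ≤ b`, viewed as the interval `[a,b] ⊆ ℤ`. -/
abbrev Seg : Type := {p : ℤ × ℤ // p.1 ≤ p.2}

/-- left endpoint -/
def segB (Δ : Seg) : ℤ := Δ.val.1
/-- right endpoint -/
def segE (Δ : Seg) : ℤ := Δ.val.2

/-- the relation `⪯'` -/
def SegLE (Δ₁ Δ₂ : Seg) : Prop := Δ₁ = Δ₂ ∨ (segB Δ₁ < segB Δ₂ ∧ segE Δ₁ < segE Δ₂)

/-- the relation `≺` ("precedes") -/
def SegPrec (Δ₁ Δ₂ : Seg) : Prop :=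
  segB Δ₁ ≤ segB Δ₂ - 1 ∧ segB Δ₂ - 1 ≤ segE Δ₁ ∧ segE Δ₁ < segE Δ₂

/-- containment `Δ₁ ⊆ Δ₂` -/
def SegSub (Δ₁ Δ₂ : Seg) : Prop := segB Δ₂ ≤ segB Δ₁ ∧ segE Δ₁ ≤ segE Δ₂

/-- a ladder multisegment -/
def IsLadder (m : Multiset Seg) : Prop :=
  ∃ l : List Seg, m = ↑l ∧ l.Chain' (fun Δ₁ Δ₂ => segB Δ₁ < segB Δ₂ ∧ segE Δ₁ < segE Δ₂)

/-- the width of a multisegment: the minimal number of ladder multisegments summing to it -/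
noncomputable def width (m : Multiset Seg) : ℕ :=
  sInf {k | ∃ L : List (Multiset Seg), L.length = k ∧ (∀ x ∈ L, IsLadder x) ∧ L.sum = m}

open scoped Classical in
/-- splitting off a maximal nested chain from a multisegment.  If `l` is a maximal
nested chain in `𝔪` (of length `ω(𝔪)`), `S` is the set of segments `⪯'`-above some member of the
chain, `𝔪₁` (resp. `𝔪₂`) is the part of `𝔪 − l` inside (resp. outside) `S`, then no segment of
the support of `𝔪 − 𝔪₂` precedes a segment of the support of `𝔪 − 𝔪₁`. -/
theorem chain_splitting (m : Multiset Seg) (k : ℕ) (hk : width m = k)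
    (l : List Seg) (hchain : l.Chain' SegSub) (hlen : l.length = k)
    (hle : (↑l : Multiset Seg) ≤ m)
    (m₁ m₂ : Multiset Seg)
    (hm₁ : m₁ = (m - ↑l).filter (fun Δ => ∃ i ∈ l, SegLE i Δ))
    (hm₂ : m₂ = (m - ↑l).filter (fun Δ => ¬ ∃ i ∈ l, SegLE i Δ)) :
    ∀ Δ ∈ m - m₂, ∀ Δ' ∈ m - m₁, ¬ SegPrec Δ Δ' := by
  classical
  intro Δ hΔ Δ' hΔ' hprec
  obtain ⟨hb, hb', he⟩ := hprec
  have hcl : ∀ x : Seg, x ∉ l → Multiset.count x (m - ↑l) = Multiset.count x m := by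
    intro x hx
    have h0 : Multiset.count x (↑l : Multiset Seg) = 0 :=
      Multiset.count_eq_zero.mpr (by simpa using hx)
    rw [Multiset.count_sub, h0]
    omega
  -- Δ is ⪯'-above some chain element
  have h1 : ∃ i ∈ l, SegLE i Δ := by
    by_cases hΔl : Δ ∈ l
    · exact ⟨Δ, hΔl, Or.inl rfl⟩
    by_cases hPΔ : ∃ i ∈ l, SegLE i Δ
    · exact hPΔ
    exfalso
    have hpos := Multiset.count_pos.mpr hΔ
    rw [Multiset.count_sub, hm₂, Multiset.count_filter, if_pos hPΔ, hcl Δ hΔl] at hpos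
    omega
  obtain ⟨i, hil, hiΔ⟩ := h1
  have hib : segB i ≤ segB Δ ∧ segE i ≤ segE Δ := by
    rcases hiΔ with rfl | ⟨h1, h2⟩
    · exact ⟨le_refl _, le_refl _⟩
    · exact ⟨le_of_lt h1, le_of_lt h2⟩
  obtain ⟨hb1, hb2⟩ := hib
  have hiΔ' : SegLE i Δ' := Or.inr ⟨by omega, by omega⟩
  -- Δ' must be in the chain, otherwise it is in m₁ which was removed
  have hΔ'l : Δ' ∈ l := by
    by_contra hΔ'l
    have hpos := Multiset.count_pos.mpr hΔ'
    rw [Multiset.count_sub, hm₁, Multiset.count_filter, if_pos ⟨i, hil, hiΔ'⟩,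
      hcl Δ' hΔ'l] at hpos
    omega
  -- compare i and Δ' via the chain
  haveI : IsTrans Seg SegSub :=
    ⟨fun a b c h1 h2 => ⟨le_trans h2.1 h1.1, le_trans h1.2 h2.2⟩⟩
  have hpw : l.Pairwise SegSub := List.isChain_iff_pairwise.mp hchain
  have hpw2 : l.Pairwise (fun a b => SegSub a b ∨ SegSub b a) := hpw.imp Or.inl
  have hcomp : i = Δ' ∨ SegSub i Δ' ∨ SegSub Δ' i := by
    by_cases heq : i = Δ'
    · exact Or.inl heq
    · exact Or.inr (by
      haveI : Std.Symm (fun a b : Seg => SegSub a b ∨ SegSub b a) := ⟨fun a b h => h.symm⟩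
      exact hpw2.forall hil hΔ'l heq)
  rcases hcomp with rfl | ⟨h1, h2⟩ | ⟨h1, h2⟩ <;> omega
end

section
/- Let a < b and a − 1 ≤ c ≤ b be integers, and consider covering the multiset of points {a,…,b} + {a,…,c} (the point a through c counted twice, c+1 through b counted once) by the supports of two multisets of pairwise disjoint segments 𝔪₁, 𝔪₂ (each consisting of pairwise unlinked, hence disjoint and non-adjacent, segments). If c < b, then the pair {𝔪₁, 𝔪₂} must have the form { Σ_{i=0}^{t} [a_{2i}, a_{2i+1} − 1], [a,c] + Σ_{i=1}^{s} [a_{2i−1}, a_{2i} − 1] } for some integers a = a₀ and c + 1 < a₁ < a₂ < ⋯ < a_l = b + 1, with either l = 2t + 1 = 2s + 1 or l = 2s = 2t + 2. -/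
/-- the support of a segment: the multiset of integer points it covers -/
noncomputable def segSupp (Δ : Seg) : Multiset ℤ := (Finset.Icc (segB Δ) (segE Δ)).val

/-- the support of a multisegment, with multiplicity -/
noncomputable def msSupp (m : Multiset Seg) : Multiset ℤ := (m.map segSupp).sum

namespace TwoSepAux

/-- separation relation -/
def Sepr (Δ Δ' : Seg) : Prop := segE Δ + 1 < segB Δ' ∨ segE Δ' + 1 < segB Δ

/-- a "good" multiset: nodup and pairwise separated -/
def Sep (m : Multiset Seg) : Prop :=
  m.Nodup ∧ ∀ Δ ∈ m, ∀ Δ' ∈ m, Δ ≠ Δ' → Sepr Δ Δ'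

lemma sepr_symm : Symmetric Sepr := fun _ _ h => Or.symm h

lemma sep_of_pairwise {m : Multiset Seg}
    (h : m.Pairwise (fun Δ Δ' => segE Δ + 1 < segB Δ' ∨ segE Δ' + 1 < segB Δ)) : Sep m := by
  constructor
  · obtain ⟨l, rfl, hl⟩ := h
    refine Multiset.coe_nodup.mpr ?_
    refine List.Pairwise.imp ?_ hl
    intro a b hab
    rintro rfl
    have := a.2
    unfold segB segE at hab
    omega
  · intro Δ h1 Δ' h2 hne
    haveI : Std.Symm (fun Δ Δ' : Seg => segE Δ + 1 < segB Δ' ∨ segE Δ' + 1 < segB Δ) :=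
      ⟨fun _ _ h => Or.symm h⟩
    exact Multiset.Pairwise.forall h h1 h2 hne

lemma sep_erase {m : Multiset Seg} {Δ : Seg} (hs : Sep m) : Sep (m.erase Δ) :=
  ⟨hs.1.erase Δ, fun Δ₁ h1 Δ₂ h2 hne =>
    hs.2 Δ₁ (Multiset.mem_of_mem_erase h1) Δ₂ (Multiset.mem_of_mem_erase h2) hne⟩

/-- count of a point in the support of a multisegment -/
noncomputable def cnt (m : Multiset Seg) (x : ℤ) : ℕ := Multiset.count x (msSupp m)

lemma count_Icc (p q x : ℤ) :
    Multiset.count x (Finset.Icc p q).val = if p ≤ x ∧ x ≤ q then 1 else 0 := by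
  rw [Multiset.count_eq_of_nodup (Finset.Icc p q).nodup]
  simp [Finset.mem_Icc]

lemma msSupp_cons (Δ : Seg) (m : Multiset Seg) :
    msSupp (Δ ::ₘ m) = segSupp Δ + msSupp m := by
  simp [msSupp]

lemma cnt_zero (x : ℤ) : cnt 0 x = 0 := by simp [cnt, msSupp]

lemma cnt_cons (Δ : Seg) (m : Multiset Seg) (x : ℤ) :
    cnt (Δ ::ₘ m) x = (if segB Δ ≤ x ∧ x ≤ segE Δ then 1 else 0) + cnt m x := by
  rw [cnt, msSupp_cons, Multiset.count_add, segSupp, count_Icc]; rfl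

lemma cnt_erase {Δ : Seg} {m : Multiset Seg} (h : Δ ∈ m) (x : ℤ) :
    cnt m x = (if segB Δ ≤ x ∧ x ≤ segE Δ then 1 else 0) + cnt (m.erase Δ) x := by
  conv_lhs => rw [← Multiset.cons_erase h]
  rw [cnt_cons]

lemma one_le_cnt {Δ : Seg} {m : Multiset Seg} {x : ℤ} (h : Δ ∈ m)
    (hx : segB Δ ≤ x ∧ x ≤ segE Δ) : 1 ≤ cnt m x := by
  rw [cnt_erase h x, if_pos hx]; omega

lemma cnt_eq_zero {m : Multiset Seg} {x : ℤ}
    (h : ∀ Δ ∈ m, ¬(segB Δ ≤ x ∧ x ≤ segE Δ)) : cnt m x = 0 := by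
  induction m using Multiset.induction_on with
  | empty => exact cnt_zero x
  | cons Δ m ih =>
    rw [cnt_cons, if_neg (h Δ (Multiset.mem_cons_self Δ m))]
    have := ih fun Δ' h' => h Δ' (Multiset.mem_cons_of_mem h'); omega

lemma exists_of_cnt_pos {m : Multiset Seg} {x : ℤ} (h : 0 < cnt m x) :
    ∃ Δ ∈ m, segB Δ ≤ x ∧ x ≤ segE Δ := by
  by_contra hcon
  push_neg at hcon
  have := cnt_eq_zero (m := m) (x := x) fun Δ hΔ hx => by
    have := hcon Δ hΔ hx.1; omega
  omega

lemma eq_zero_of_cnt_zero {m : Multiset Seg} (h : ∀ x, cnt m x = 0) : m = 0 := by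
  by_contra hm
  obtain ⟨Δ, hΔ⟩ := Multiset.exists_mem_of_ne_zero hm
  have := one_le_cnt (x := segB Δ) hΔ ⟨le_refl _, Δ.2⟩
  rw [h] at this; omega

lemma cnt_le_one : ∀ {m : Multiset Seg}, Sep m → ∀ x, cnt m x ≤ 1 := by
  intro m
  induction m using Multiset.induction_on with
  | empty => intro _ x; rw [cnt_zero]; omega
  | cons Δ m ih =>
    intro hs x
    have hnd := hs.1
    rw [Multiset.nodup_cons] at hnd
    have hsm : Sep m := ⟨hnd.2, fun Δ₁ h1 Δ₂ h2 hne =>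
      hs.2 Δ₁ (Multiset.mem_cons_of_mem h1) Δ₂ (Multiset.mem_cons_of_mem h2) hne⟩
    rw [cnt_cons]
    split_ifs with hx
    · have h0 : cnt m x = 0 := by
        refine cnt_eq_zero fun Δ' hΔ' hx' => ?_
        have hne : Δ ≠ Δ' := fun he => hnd.1 (he ▸ hΔ')
        have hsep := hs.2 Δ (Multiset.mem_cons_self Δ m) Δ' (Multiset.mem_cons_of_mem hΔ') hne
        unfold Sepr at hsep
        omega
      omega
    · have := ih hsm x; omega

lemma seg_bounds {a b c : ℤ} (hcb : c ≤ b) {m₁ m₂ : Multiset Seg}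
    (hcnt : ∀ x, cnt m₁ x + cnt m₂ x =
      (if a ≤ x ∧ x ≤ b then 1 else 0) + (if a ≤ x ∧ x ≤ c then 1 else 0))
    {Δ : Seg} (h : Δ ∈ m₁) : a ≤ segB Δ ∧ segE Δ ≤ b := by
  have h1 := one_le_cnt (x := segB Δ) h ⟨le_refl _, Δ.2⟩
  have h2 := one_le_cnt (x := segE Δ) h ⟨Δ.2, le_refl _⟩
  have e1 := hcnt (segB Δ)
  have e2 := hcnt (segE Δ)
  constructor
  · split_ifs at e1 <;> omega
  · split_ifs at e2 <;> omega

lemma map_eq_single {m : Multiset Seg} (hs : Sep m) {p q : ℤ} (hpq : p ≤ q)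
    (h : ∀ x, cnt m x = if p ≤ x ∧ x ≤ q then 1 else 0) :
    m.map Subtype.val = {((p : ℤ), q)} := by
  have h1 : 0 < cnt m p := by rw [h]; rw [if_pos ⟨le_refl _, hpq⟩]; omega
  obtain ⟨Δ, hΔ, hx⟩ := exists_of_cnt_pos h1
  have hB1 : p ≤ segB Δ := by
    have h2 := one_le_cnt (x := segB Δ) hΔ ⟨le_refl _, Δ.2⟩
    rw [h (segB Δ)] at h2
    split_ifs at h2 with hcond
    · exact hcond.1
    · omega
  have hBp : segB Δ = p := le_antisymm hx.1 hB1
  have hE1 : segE Δ ≤ q := by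
    have h2 := one_le_cnt (x := segE Δ) hΔ ⟨Δ.2, le_refl _⟩
    rw [h (segE Δ)] at h2
    split_ifs at h2 with hcond
    · exact hcond.2
    · omega
  have hEq : segE Δ = q := by
    by_contra hne
    have h3 : 0 < cnt m (segE Δ + 1) := by
      rw [h, if_pos ⟨by have := Δ.2; omega, by omega⟩]; omega
    obtain ⟨Δ', hΔ', hx'⟩ := exists_of_cnt_pos h3
    have hne' : Δ ≠ Δ' := by
      rintro rfl; omega
    have hsep := hs.2 Δ hΔ Δ' hΔ' hne'
    unfold Sepr at hsep
    have hB1' : p ≤ segB Δ' := by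
      have h2 := one_le_cnt (x := segB Δ') hΔ' ⟨le_refl _, Δ'.2⟩
      rw [h (segB Δ')] at h2
      split_ifs at h2 with hcond
      · exact hcond.1
      · omega
    have := Δ.2
    omega
  have hres : ∀ x, cnt (m.erase Δ) x = 0 := by
    intro x
    have h0 := h x
    rw [cnt_erase hΔ, hBp, hEq] at h0
    split_ifs at h0 <;> omega
  have h0 : m.erase Δ = 0 := eq_zero_of_cnt_zero hres
  have hm : m = Δ ::ₘ 0 := by rw [← Multiset.cons_erase hΔ, h0]
  rw [hm, Multiset.map_cons, Multiset.map_zero]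
  have : Δ.val = (p, q) := by
    rw [Prod.ext_iff]; exact ⟨hBp, hEq⟩
  rw [this]
  rfl

/-- extension of the breakpoint function -/
def extA (A : ℕ → ℤ) (l : ℕ) (b : ℤ) : ℕ → ℤ := fun i => if i ≤ l then A i else b + 1

lemma extA_le {A : ℕ → ℤ} {l : ℕ} {b : ℤ} {i : ℕ} (h : i ≤ l) : extA A l b i = A i := if_pos h

lemma extA_gt {A : ℕ → ℤ} {l : ℕ} {b : ℤ} {i : ℕ} (h : l < i) : extA A l b i = b + 1 :=
  if_neg (by omega)

/-- the conclusion, as a standalone predicate -/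
def Conc (a b c : ℤ) (m₁ m₂ : Multiset Seg) : Prop :=
  ∃ (l s t : ℕ) (A : ℕ → ℤ),
      A 0 = a ∧ A l = b + 1 ∧ c + 1 < A 1 ∧
      (∀ i, 1 ≤ i → i < l → A i < A (i + 1)) ∧
      ((l = 2 * t + 1 ∧ l = 2 * s + 1) ∨ (l = 2 * s ∧ l = 2 * t + 2)) ∧
      ((m₁.map Subtype.val =
          (Multiset.range (t + 1)).map (fun i => (A (2 * i), A (2 * i + 1) - 1)) ∧
        m₂.map Subtype.val =
          (if a ≤ c then {((a : ℤ), c)} else 0) +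
            (Multiset.range s).map (fun i => (A (2 * i + 1), A (2 * i + 2) - 1))) ∨
       (m₂.map Subtype.val =
          (Multiset.range (t + 1)).map (fun i => (A (2 * i), A (2 * i + 1) - 1)) ∧
        m₁.map Subtype.val =
          (if a ≤ c then {((a : ℤ), c)} else 0) +
            (Multiset.range s).map (fun i => (A (2 * i + 1), A (2 * i + 2) - 1))))

lemma conc_swap {a b c : ℤ} {m₁ m₂ : Multiset Seg} (h : Conc a b c m₁ m₂) :
    Conc a b c m₂ m₁ := by
  obtain ⟨l, s, t, A, h1, h2, h3, h4, h5, h6⟩ := h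
  exact ⟨l, s, t, A, h1, h2, h3, h4, h5, h6.symm⟩

lemma core : ∀ (n : ℕ) (a b c : ℤ), (b - a).toNat ≤ n → a ≤ b → a - 1 ≤ c → c < b →
    ∀ m₁ m₂ : Multiset Seg, Sep m₁ → Sep m₂ →
    (∀ x, cnt m₁ x + cnt m₂ x =
      (if a ≤ x ∧ x ≤ b then 1 else 0) + (if a ≤ x ∧ x ≤ c then 1 else 0)) →
    ∀ Δ : Seg, Δ ∈ m₁ → segE Δ = b → Conc a b c m₁ m₂ := by
  intro n
  induction n using Nat.strong_induction_on with
  | _ n ih =>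
  intro a b c hn hab hc hcb m₁ m₂ hs1 hs2 hcnt Δ hΔ hΔb
  have hΔ2 : segB Δ ≤ segE Δ := Δ.2
  have hub : segB Δ ≤ b := by omega
  -- a ≤ segB Δ
  have hua : a ≤ segB Δ := (seg_bounds (le_of_lt hcb) hcnt hΔ).1
  -- all other segments of m₁ end before segB Δ - 1
  have hS : ∀ Δ' ∈ m₁.erase Δ, segE Δ' + 1 < segB Δ := by
    intro Δ' h'
    have hne : Δ' ≠ Δ := (hs1.1.mem_erase_iff.mp h').1
    have hmem := Multiset.mem_of_mem_erase h'
    have hb' := (seg_bounds (le_of_lt hcb) hcnt hmem).2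
    have hsep := hs1.2 Δ hΔ Δ' hmem hne.symm
    have h2' : segB Δ' ≤ segE Δ' := Δ'.2
    unfold Sepr at hsep
    omega
  have hcnt1' : ∀ x, segB Δ - 1 ≤ x → cnt (m₁.erase Δ) x = 0 := by
    intro x hx
    refine cnt_eq_zero fun Δ' h' hx' => ?_
    have := hS Δ' h'
    omega
  have hval : Δ.val = (segB Δ, b) := by rw [Prod.ext_iff]; exact ⟨rfl, hΔb⟩
  have htri : segB Δ ≤ c ∨ segB Δ = c + 1 ∨ c + 2 ≤ segB Δ := by omega
  rcases htri with hcase | hcase | hcase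
  · -- Case A : segB Δ ≤ c.  Forces segB Δ = a, m₁ = {[a,b]}, m₂ = {[a,c]}.
    have hua' : segB Δ = a := by
      by_contra hne
      have e := hcnt (segB Δ - 1)
      rw [cnt_erase hΔ, if_neg (by omega), hcnt1' (segB Δ - 1) (by omega)] at e
      have h2 := cnt_le_one hs2 (segB Δ - 1)
      split_ifs at e <;> omega
    have hac : a ≤ c := by omega
    have hres : ∀ x, cnt (m₁.erase Δ) x + cnt m₂ x = if a ≤ x ∧ x ≤ c then 1 else 0 := by
      intro x
      have h0 := hcnt x
      rw [cnt_erase hΔ, hua', hΔb] at h0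
      split_ifs at h0 ⊢ <;> omega
    have h10 : m₁.erase Δ = 0 := by
      by_contra hne
      obtain ⟨Δ', hΔ'⟩ := Multiset.exists_mem_of_ne_zero hne
      have hb' := (seg_bounds (le_of_lt hcb) hcnt (Multiset.mem_of_mem_erase hΔ')).1
      have := hS Δ' hΔ'
      have h2' : segB Δ' ≤ segE Δ' := Δ'.2
      omega
    have hm2 : ∀ x, cnt m₂ x = if a ≤ x ∧ x ≤ c then 1 else 0 := by
      intro x
      have := hres x
      rw [h10, cnt_zero] at this
      omega
    have hm2s := map_eq_single hs2 hac hm2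
    refine ⟨1, 0, 0, fun i => if i = 0 then a else b + 1, by simp, by norm_num, by norm_num; omega,
      by intro i h1 h2; omega, Or.inl ⟨by omega, by omega⟩, Or.inl ⟨?_, ?_⟩⟩
    · rw [← Multiset.cons_erase hΔ, h10, Multiset.map_cons, Multiset.map_zero]
      rw [hval, hua']
      rw [Multiset.range_succ, Multiset.range_zero, Multiset.map_cons, Multiset.map_zero]
      norm_num
    · rw [hm2s, if_pos hac]
      rw [Multiset.range_zero, Multiset.map_zero, add_zero]
  · -- Case B : segB Δ = c + 1.  Forces c = a - 1, m₁ = {[a,b]}, m₂ = 0.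
    have hca : c = a - 1 := by
      by_contra hne
      have hac : a ≤ c := by omega
      have e := hcnt c
      rw [cnt_erase hΔ, if_neg (by omega), hcnt1' c (by omega)] at e
      have h2 := cnt_le_one hs2 c
      split_ifs at e <;> omega
    have hua' : segB Δ = a := by omega
    have hres : ∀ x, cnt (m₁.erase Δ) x + cnt m₂ x = 0 := by
      intro x
      have h0 := hcnt x
      rw [cnt_erase hΔ, hua', hΔb] at h0
      split_ifs at h0 <;> omega
    have h10 : m₁.erase Δ = 0 := eq_zero_of_cnt_zero fun x => by have := hres x; omega
    have h20 : m₂ = 0 := eq_zero_of_cnt_zero fun x => by have := hres x; omega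
    refine ⟨1, 0, 0, fun i => if i = 0 then a else b + 1, by simp, by norm_num, by norm_num; omega,
      by intro i h1 h2; omega, Or.inl ⟨by omega, by omega⟩, Or.inl ⟨?_, ?_⟩⟩
    · rw [← Multiset.cons_erase hΔ, h10, Multiset.map_cons, Multiset.map_zero]
      rw [hval, hua']
      rw [Multiset.range_succ, Multiset.range_zero, Multiset.map_cons, Multiset.map_zero]
      norm_num
    · rw [h20, if_neg (by omega)]
      simp
  · -- Case C : c + 2 ≤ segB Δ.  Recurse on [a, segB Δ - 1].
    have hua2 : a + 1 ≤ segB Δ := by omega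
    have hres : ∀ x, cnt m₂ x + cnt (m₁.erase Δ) x =
        (if a ≤ x ∧ x ≤ segB Δ - 1 then 1 else 0) + (if a ≤ x ∧ x ≤ c then 1 else 0) := by
      intro x
      have h0 := hcnt x
      rw [cnt_erase hΔ, hΔb] at h0
      split_ifs at h0 ⊢ <;> omega
    -- find the segment of m₂ ending at segB Δ - 1
    have h1 : 0 < cnt m₂ (segB Δ - 1) := by
      have := hres (segB Δ - 1)
      rw [hcnt1' (segB Δ - 1) (le_refl _)] at this
      rw [if_pos ⟨by omega, le_refl _⟩] at this
      split_ifs at this <;> omega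
    obtain ⟨Δ₂, hΔ₂, hx₂⟩ := exists_of_cnt_pos h1
    have hE2 : segE Δ₂ = segB Δ - 1 :=
      le_antisymm (seg_bounds (by omega) hres hΔ₂).2 hx₂.2
    have hconc := ih ((segB Δ - 1) - a).toNat (by omega) a (segB Δ - 1) c (by omega)
      (by omega) hc (by omega) m₂ (m₁.erase Δ) hs2 (sep_erase hs1) hres Δ₂ hΔ₂ hE2
    obtain ⟨l', s', t', A', hA0, hAl, hA1, hmono, hpar, hN⟩ := hconc
    have hl'pos : 1 ≤ l' := by rcases hpar with ⟨h, _⟩ | ⟨h, h2⟩ <;> omega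
    have hAl' : A' l' = segB Δ := by omega
    -- no segment of m₁.erase Δ ends at segB Δ - 1
    have hkey : ∀ Δ' ∈ m₁.erase Δ, segE Δ' ≠ segB Δ - 1 := by
      intro Δ' h'
      have := hS Δ' h'
      omega
    -- common facts about the extended breakpoint function
    have hcA0 : extA A' l' b 0 = a := by rw [extA_le (Nat.zero_le _)]; exact hA0
    have hcAl : extA A' l' b (l' + 1) = b + 1 := extA_gt (by omega)
    have hcA1 : c + 1 < extA A' l' b 1 := by rw [extA_le hl'pos]; exact hA1
    have hcmono : ∀ i, 1 ≤ i → i < l' + 1 → extA A' l' b i < extA A' l' b (i + 1) := by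
      intro i hi1 hi2
      by_cases hi : i < l'
      · rw [extA_le (by omega), extA_le (by omega)]
        exact hmono i hi1 hi
      · have : i = l' := by omega
        subst this
        rw [extA_le (le_refl _), extA_gt (by omega), hAl']
        omega
    rcases hN with ⟨h2N, h1N⟩ | ⟨h1N, h2N⟩
    · -- m₂ = N₁', m₁.erase Δ = N₂' : parity must be odd
      rcases hpar with ⟨ht', hs'⟩ | ⟨hs', ht'⟩
      · -- l' = 2t'+1 = 2s'+1 : extend, new block goes to N₂
        refine ⟨l' + 1, s' + 1, t', extA A' l' b, hcA0, hcAl, hcA1, hcmono,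
          Or.inr ⟨by omega, by omega⟩, Or.inr ⟨?_, ?_⟩⟩
        · -- m₂ = N₁ (unchanged)
          rw [h2N]
          refine Multiset.map_congr rfl fun i hi => ?_
          rw [Multiset.mem_range] at hi
          rw [extA_le (by omega), extA_le (by omega)]
        · -- m₁ = N₂' + new block
          rw [← Multiset.cons_erase hΔ, Multiset.map_cons, h1N]
          rw [Multiset.range_succ, Multiset.map_cons, Multiset.add_cons]
          have hhead : (extA A' l' b (2 * s' + 1), extA A' l' b (2 * s' + 2) - 1) = Δ.val := by
            rw [hval]
            have e1 : 2 * s' + 1 = l' := by omega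
            rw [e1, extA_le (le_refl _), hAl', extA_gt (by omega)]
            norm_num
          rw [hhead]
          congr 1
          congr 1
          refine Multiset.map_congr rfl fun i hi => ?_
          rw [Multiset.mem_range] at hi
          rw [extA_le (by omega), extA_le (by omega)]
      · -- l' = 2s' even : contradiction, last block of N₂' would be in m₁.erase Δ
        exfalso
        have hs'pos : 1 ≤ s' := by omega
        have hmem : ((A' (2 * (s' - 1) + 1), A' (2 * (s' - 1) + 2) - 1) : ℤ × ℤ) ∈
            (m₁.erase Δ).map Subtype.val := by
          rw [h1N]
          refine Multiset.mem_add.mpr (Or.inr ?_)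
          exact Multiset.mem_map.mpr ⟨s' - 1, Multiset.mem_range.mpr (by omega), rfl⟩
        obtain ⟨Δ', hΔ', hval'⟩ := Multiset.mem_map.mp hmem
        have h3 : segE Δ' = A' (2 * (s' - 1) + 2) - 1 := by
          show Δ'.val.2 = _
          rw [hval']
        have h4 : 2 * (s' - 1) + 2 = l' := by omega
        rw [h4, hAl'] at h3
        exact hkey Δ' hΔ' (by omega)
    · -- m₁.erase Δ = N₁', m₂ = N₂' : parity must be even
      rcases hpar with ⟨ht', hs'⟩ | ⟨hs', ht'⟩
      · -- l' = 2t'+1 odd : contradiction, last block of N₁' would be in m₁.erase Δ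
        exfalso
        have hmem : ((A' (2 * t'), A' (2 * t' + 1) - 1) : ℤ × ℤ) ∈
            (m₁.erase Δ).map Subtype.val := by
          rw [h1N]
          exact Multiset.mem_map.mpr ⟨t', Multiset.mem_range.mpr (by omega), rfl⟩
        obtain ⟨Δ', hΔ', hval'⟩ := Multiset.mem_map.mp hmem
        have h3 : segE Δ' = A' (2 * t' + 1) - 1 := by
          show Δ'.val.2 = _
          rw [hval']
        have h4 : 2 * t' + 1 = l' := by omega
        rw [h4, hAl'] at h3
        exact hkey Δ' hΔ' (by omega)
      · -- l' = 2s' = 2t'+2 : extend, new block goes to N₁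
        refine ⟨l' + 1, s', t' + 1, extA A' l' b, hcA0, hcAl, hcA1, hcmono,
          Or.inl ⟨by omega, by omega⟩, Or.inl ⟨?_, ?_⟩⟩
        · -- m₁ = N₁' + new block
          rw [← Multiset.cons_erase hΔ, Multiset.map_cons, h1N]
          conv_rhs => rw [Multiset.range_succ, Multiset.map_cons]
          have hhead : (extA A' l' b (2 * (t' + 1)), extA A' l' b (2 * (t' + 1) + 1) - 1)
              = Δ.val := by
            rw [hval]
            have e1 : 2 * (t' + 1) = l' := by omega
            rw [e1, extA_le (le_refl _), hAl', extA_gt (by omega)]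
            norm_num
          congr 1
          · exact hhead.symm
          · refine (Multiset.map_congr rfl fun i hi => ?_).symm
            rw [Multiset.mem_range] at hi
            rw [extA_le (by omega), extA_le (by omega)]
        · -- m₂ = N₂ (unchanged)
          rw [h2N]
          congr 1
          refine Multiset.map_congr rfl fun i hi => ?_
          rw [Multiset.mem_range] at hi
          rw [extA_le (by omega), extA_le (by omega)]

end TwoSepAux


theorem two_separated_covers_alternate (a b c : ℤ)
    (hab : a < b) (hc : a - 1 ≤ c) (hcb : c < b)
    (m₁ m₂ : Multiset Seg)
    (hsep₁ : m₁.Pairwise (fun Δ Δ' => segE Δ + 1 < segB Δ' ∨ segE Δ' + 1 < segB Δ))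
    (hsep₂ : m₂.Pairwise (fun Δ Δ' => segE Δ + 1 < segB Δ' ∨ segE Δ' + 1 < segB Δ))
    (hsupp : msSupp m₁ + msSupp m₂ = (Finset.Icc a b).val + (Finset.Icc a c).val) :
    ∃ (l s t : ℕ) (A : ℕ → ℤ),
      A 0 = a ∧ A l = b + 1 ∧ c + 1 < A 1 ∧
      (∀ i, 1 ≤ i → i < l → A i < A (i + 1)) ∧
      ((l = 2 * t + 1 ∧ l = 2 * s + 1) ∨ (l = 2 * s ∧ l = 2 * t + 2)) ∧
      (let N₁ : Multiset (ℤ × ℤ) :=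
          (Multiset.range (t + 1)).map (fun i => (A (2 * i), A (2 * i + 1) - 1));
       let N₂ : Multiset (ℤ × ℤ) :=
          (if a ≤ c then {((a : ℤ), c)} else 0) +
            (Multiset.range s).map (fun i => (A (2 * i + 1), A (2 * i + 2) - 1));
       (m₁.map Subtype.val = N₁ ∧ m₂.map Subtype.val = N₂) ∨
         (m₂.map Subtype.val = N₁ ∧ m₁.map Subtype.val = N₂)) := by
  have hcnt : ∀ x, TwoSepAux.cnt m₁ x + TwoSepAux.cnt m₂ x =
      (if a ≤ x ∧ x ≤ b then 1 else 0) + (if a ≤ x ∧ x ≤ c then 1 else 0) := by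
    intro x
    have h := congrArg (Multiset.count x) hsupp
    rw [Multiset.count_add, Multiset.count_add, TwoSepAux.count_Icc, TwoSepAux.count_Icc] at h
    exact h
  have hb := hcnt b
  rw [if_pos ⟨le_of_lt hab, le_refl _⟩, if_neg (by omega)] at hb
  have h1 : 0 < TwoSepAux.cnt m₁ b ∨ 0 < TwoSepAux.cnt m₂ b := by omega
  show TwoSepAux.Conc a b c m₁ m₂
  rcases h1 with h1 | h1
  · obtain ⟨Δ, hΔ, hx⟩ := TwoSepAux.exists_of_cnt_pos h1
    have hbb : segE Δ = b :=
      le_antisymm (TwoSepAux.seg_bounds (le_of_lt hcb) hcnt hΔ).2 hx.2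
    exact TwoSepAux.core (b - a).toNat a b c le_rfl (le_of_lt hab) hc hcb m₁ m₂
      (TwoSepAux.sep_of_pairwise hsep₁) (TwoSepAux.sep_of_pairwise hsep₂) hcnt Δ hΔ hbb
  · have hcnt' : ∀ x, TwoSepAux.cnt m₂ x + TwoSepAux.cnt m₁ x =
        (if a ≤ x ∧ x ≤ b then 1 else 0) + (if a ≤ x ∧ x ≤ c then 1 else 0) := by
      intro x; have := hcnt x; omega
    obtain ⟨Δ, hΔ, hx⟩ := TwoSepAux.exists_of_cnt_pos h1
    have hbb : segE Δ = b :=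
      le_antisymm (TwoSepAux.seg_bounds (le_of_lt hcb) hcnt' hΔ).2 hx.2
    exact TwoSepAux.conc_swap (TwoSepAux.core (b - a).toNat a b c le_rfl (le_of_lt hab) hc hcb
      m₂ m₁ (TwoSepAux.sep_of_pairwise hsep₂) (TwoSepAux.sep_of_pairwise hsep₁) hcnt' Δ hΔ hbb)
end

section
/- With notation as follows: suppose a = a₀, e < a₁ < ⋯ < a_l = b+1 and a = a'₀, e < a'₁ < ⋯ < a'_{l'} = b+1 are two strictly increasing integer sequences with the same first and last terms, and suppose each odd-indexed interval [a_{2i−1}, a_{2i} − 1] (respectively [a'_{2i−1}, a'_{2i} − 1]) arises as a 'truncation' [cⱼ, eⱼ] of a fixed ladder's segments [dⱼ, eⱼ] (meaning the right endpoints eⱼ come from a fixed strictly decreasing sequence and dⱼ ≤ cⱼ ≤ eⱼ + 1 with cⱼ strictly decreasing in j), and similarly each even-indexed interval arises from a second fixed ladder. Then the two sequences coincide: l = l' and aᵢ = a'ᵢ for all i. -/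
lemma auxChainLt (l : ℕ) (A : ℕ → ℤ) (h : ∀ i, i < l → A i < A (i + 1)) :
    ∀ i j, i < j → j ≤ l → A i < A j := by
  intro i j hij hjl
  induction j with
  | zero => omega
  | succ n ih =>
    rcases Nat.lt_or_ge i n with h1 | h1
    · exact lt_trans (ih h1 (by omega)) (h n (by omega))
    · have hin : i = n := by omega
      subst hin
      exact h i (by omega)

lemma auxLtIndex (l : ℕ) (A : ℕ → ℤ) (h : ∀ i, i < l → A i < A (i + 1)) :
    ∀ s t, s ≤ l → t ≤ l → A s < A t → s < t := by
  intro s t hs ht hst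
  by_contra hc
  push_neg at hc
  rcases Nat.lt_or_ge t s with h1 | h1
  · have := auxChainLt l A h t s h1 hs
    omega
  · have : t = s := by omega
    subst this; omega

lemma auxDecChain (k : ℕ) (f : ℕ → ℤ) (h : ∀ j, 1 ≤ j → j < k → f (j + 1) < f j) :
    ∀ i j, 1 ≤ i → i < j → j ≤ k → f j < f i := by
  intro i j h1 hij hjk
  induction j with
  | zero => omega
  | succ n ih =>
    rcases Nat.lt_or_ge i n with hx | hx
    · exact lt_trans (h n (by omega) (by omega)) (ih hx (by omega))
    · have hin : i = n := by omega
      subst hin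
      exact h i (by omega) (by omega)

lemma auxDecInj (k : ℕ) (f : ℕ → ℤ) (h : ∀ j, 1 ≤ j → j < k → f (j + 1) < f j) :
    ∀ i j, 1 ≤ i → i ≤ k → 1 ≤ j → j ≤ k → f i = f j → i = j := by
  intro i j hi hik hj hjk hf
  rcases lt_trichotomy i j with h1 | h1 | h1
  · have := auxDecChain k f h i j hi h1 hjk; omega
  · exact h1
  · have := auxDecChain k f h j i hj h1 hik; omega

/-- uniqueness of the alternating-block decomposition compatible with
left-truncations of two fixed ladders.  The segments of ladder `i` are `[dᵢ j, eᵢ j]`,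
`j = 1,…,kᵢ`, enumerated with strictly decreasing right (and left) endpoints; a truncation
datum is a strictly decreasing choice `cᵢ j` with `dᵢ j ≤ cᵢ j ≤ eᵢ j + 1`.  Two alternating
decompositions `A, A'` of `[a,b] ∖ [a,e]` whose even-indexed blocks are nontrivial truncated
segments of ladder 1, odd-indexed blocks nontrivial truncated segments of ladder 2, and
conversely, must coincide. -/
theorem alternating_decomposition_unique
    (a b eInt : ℤ) (l l' : ℕ) (A A' : ℕ → ℤ)
    (k₁ k₂ : ℕ) (d₁ e₁ c₁ c₁' d₂ e₂ c₂ c₂' : ℕ → ℤ)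
    -- the two ladders
    (he₁ : ∀ j, 1 ≤ j → j < k₁ → e₁ (j + 1) < e₁ j)
    (hd₁ : ∀ j, 1 ≤ j → j < k₁ → d₁ (j + 1) < d₁ j)
    (he₂ : ∀ j, 1 ≤ j → j < k₂ → e₂ (j + 1) < e₂ j)
    (hd₂ : ∀ j, 1 ≤ j → j < k₂ → d₂ (j + 1) < d₂ j)
    (hde₁ : ∀ j, 1 ≤ j → j ≤ k₁ → d₁ j ≤ e₁ j)
    (hde₂ : ∀ j, 1 ≤ j → j ≤ k₂ → d₂ j ≤ e₂ j)
    -- the truncation data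
    (hc₁ : ∀ j, 1 ≤ j → j ≤ k₁ → d₁ j ≤ c₁ j ∧ c₁ j ≤ e₁ j + 1)
    (hc₁m : ∀ j, 1 ≤ j → j < k₁ → c₁ (j + 1) < c₁ j)
    (hc₂ : ∀ j, 1 ≤ j → j ≤ k₂ → d₂ j ≤ c₂ j ∧ c₂ j ≤ e₂ j + 1)
    (hc₂m : ∀ j, 1 ≤ j → j < k₂ → c₂ (j + 1) < c₂ j)
    (hc₁' : ∀ j, 1 ≤ j → j ≤ k₁ → d₁ j ≤ c₁' j ∧ c₁' j ≤ e₁ j + 1)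
    (hc₁m' : ∀ j, 1 ≤ j → j < k₁ → c₁' (j + 1) < c₁' j)
    (hc₂' : ∀ j, 1 ≤ j → j ≤ k₂ → d₂ j ≤ c₂' j ∧ c₂' j ≤ e₂ j + 1)
    (hc₂m' : ∀ j, 1 ≤ j → j < k₂ → c₂' (j + 1) < c₂' j)
    -- the two strictly increasing block-boundary sequences, same first and last terms
    (hA0 : A 0 = a) (hA'0 : A' 0 = a) (hAl : A l = b + 1) (hA'l : A' l' = b + 1)
    (hA1 : eInt < A 1) (hA'1 : eInt < A' 1)
    (hAmono : ∀ i, i < l → A i < A (i + 1))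
    (hA'mono : ∀ i, i < l' → A' i < A' (i + 1))
    -- blocks of A are truncated segments of the respective ladders
    (hAodd : ∀ i, 2 * i + 1 ≤ l → ∃ j, 1 ≤ j ∧ j ≤ k₁ ∧
      A (2 * i) = c₁ j ∧ A (2 * i + 1) - 1 = e₁ j)
    (hAeven : ∀ i, 1 ≤ i → 2 * i ≤ l → ∃ j, 1 ≤ j ∧ j ≤ k₂ ∧
      A (2 * i - 1) = c₂ j ∧ A (2 * i) - 1 = e₂ j)
    (hA'odd : ∀ i, 2 * i + 1 ≤ l' → ∃ j, 1 ≤ j ∧ j ≤ k₁ ∧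
      A' (2 * i) = c₁' j ∧ A' (2 * i + 1) - 1 = e₁ j)
    (hA'even : ∀ i, 1 ≤ i → 2 * i ≤ l' → ∃ j, 1 ≤ j ∧ j ≤ k₂ ∧
      A' (2 * i - 1) = c₂' j ∧ A' (2 * i) - 1 = e₂ j)
    -- conversely, every nontrivial truncated segment is a block
    (hrev₁ : ∀ j, 1 ≤ j → j ≤ k₁ → c₁ j ≤ e₁ j →
      ∃ i, 2 * i + 1 ≤ l ∧ A (2 * i) = c₁ j ∧ A (2 * i + 1) - 1 = e₁ j)
    (hrev₂ : ∀ j, 1 ≤ j → j ≤ k₂ → c₂ j ≤ e₂ j →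
      ∃ i, 1 ≤ i ∧ 2 * i ≤ l ∧ A (2 * i - 1) = c₂ j ∧ A (2 * i) - 1 = e₂ j)
    (hrev₁' : ∀ j, 1 ≤ j → j ≤ k₁ → c₁' j ≤ e₁ j →
      ∃ i, 2 * i + 1 ≤ l' ∧ A' (2 * i) = c₁' j ∧ A' (2 * i + 1) - 1 = e₁ j)
    (hrev₂' : ∀ j, 1 ≤ j → j ≤ k₂ → c₂' j ≤ e₂ j →
      ∃ i, 1 ≤ i ∧ 2 * i ≤ l' ∧ A' (2 * i - 1) = c₂' j ∧ A' (2 * i) - 1 = e₂ j) :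
    l = l' ∧ ∀ i, i ≤ l → A i = A' i := by

  have incA := auxChainLt l A hAmono
  have incA' := auxChainLt l' A' hA'mono
  have ltA := auxLtIndex l A hAmono
  have ltA' := auxLtIndex l' A' hA'mono
  have decE₁ := auxDecChain k₁ e₁ he₁
  have decE₂ := auxDecChain k₂ e₂ he₂
  have decC₁ := auxDecChain k₁ c₁ hc₁m
  have decC₁' := auxDecChain k₁ c₁' hc₁m'
  have decC₂ := auxDecChain k₂ c₂ hc₂m
  have decC₂' := auxDecChain k₂ c₂' hc₂m'
  have injE₁ := auxDecInj k₁ e₁ he₁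
  have injE₂ := auxDecInj k₂ e₂ he₂
  have key : ∀ i, i ≤ l → i ≤ l' → A i = A' i := by
    intro i
    induction i using Nat.strong_induction_on with
    | _ i ih =>
      intro hil hil'
      by_contra hne
      rcases Nat.eq_zero_or_pos i with h0 | h0
      · subst h0; rw [hA0, hA'0] at hne; exact hne rfl
      rcases Nat.even_or_odd i with ⟨t, hteq⟩ | ⟨t, hteq⟩
      · -- even case: i = 2t, t ≥ 1
        have hti : i = 2 * t := by omega
        subst hti
        have ht1 : 1 ≤ t := by omega
        obtain ⟨j, hj1, hjk, hAc, hAe⟩ := hAeven t ht1 hil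
        obtain ⟨j', hj'1, hj'k, hA'c, hA'e⟩ := hA'even t ht1 hil'
        have h2t1 : A (2 * t - 1) = A' (2 * t - 1) :=
          ih (2 * t - 1) (by omega) (by omega) (by omega)
        have hcc : c₂ j = c₂' j' := by rw [← hAc, ← hA'c, h2t1]
        have hjj' : j ≠ j' := by
          intro h; subst h; exact hne (by omega)
        have hnt : c₂ j ≤ e₂ j := by
          have := incA (2 * t - 1) (2 * t) (by omega) (by omega); omega
        have hnt' : c₂' j' ≤ e₂ j' := by
          have := incA' (2 * t - 1) (2 * t) (by omega) (by omega); omega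
        rcases Nat.lt_or_ge j j' with hlt | hge
        · have hee : e₂ j' < e₂ j := decE₂ j j' hj1 hlt hj'k
          have hcj : c₂ j' < c₂ j := decC₂ j j' hj1 hlt hj'k
          obtain ⟨s, hs1, hsl, hsc, hse⟩ := hrev₂ j' hj'1 hj'k (by omega)
          have hst : 2 * s < 2 * t := ltA (2 * s) (2 * t) hsl hil (by omega)
          have hAs0 : A (2 * s - 1) = A' (2 * s - 1) :=
            ih (2 * s - 1) (by omega) (by omega) (by omega)
          have hAs1 : A (2 * s) = A' (2 * s) :=
            ih (2 * s) (by omega) (by omega) (by omega)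
          obtain ⟨j'', hj''1, hj''k, hsc', hse'⟩ := hA'even s hs1 (by omega)
          have hjj : j'' = j' := injE₂ j'' j' hj''1 hj''k hj'1 hj'k (by omega)
          subst hjj
          omega
        · have hge' : j' < j := by omega
          have hee : e₂ j < e₂ j' := decE₂ j' j hj'1 hge' hjk
          have hcj : c₂' j < c₂' j' := decC₂' j' j hj'1 hge' hjk
          obtain ⟨s, hs1, hsl, hsc, hse⟩ := hrev₂' j hj1 hjk (by omega)
          have hst : 2 * s < 2 * t := ltA' (2 * s) (2 * t) hsl hil' (by omega)
          have hAs0 : A (2 * s - 1) = A' (2 * s - 1) :=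
            ih (2 * s - 1) (by omega) (by omega) (by omega)
          have hAs1 : A (2 * s) = A' (2 * s) :=
            ih (2 * s) (by omega) (by omega) (by omega)
          obtain ⟨j'', hj''1, hj''k, hsc', hse'⟩ := hAeven s hs1 (by omega)
          have hjj : j'' = j := injE₂ j'' j hj''1 hj''k hj1 hjk (by omega)
          subst hjj
          omega
      · -- odd case: i = 2t + 1
        subst hteq
        obtain ⟨j, hj1, hjk, hAc, hAe⟩ := hAodd t hil
        obtain ⟨j', hj'1, hj'k, hA'c, hA'e⟩ := hA'odd t hil'
        have h2t : A (2 * t) = A' (2 * t) :=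
          ih (2 * t) (by omega) (by omega) (by omega)
        have hcc : c₁ j = c₁' j' := by rw [← hAc, ← hA'c, h2t]
        have hjj' : j ≠ j' := by
          intro h; subst h; exact hne (by omega)
        have hnt : c₁ j ≤ e₁ j := by
          have := incA (2 * t) (2 * t + 1) (by omega) (by omega); omega
        have hnt' : c₁' j' ≤ e₁ j' := by
          have := incA' (2 * t) (2 * t + 1) (by omega) (by omega); omega
        rcases Nat.lt_or_ge j j' with hlt | hge
        · have hee : e₁ j' < e₁ j := decE₁ j j' hj1 hlt hj'k
          have hcj : c₁ j' < c₁ j := decC₁ j j' hj1 hlt hj'k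
          obtain ⟨s, hsl, hsc, hse⟩ := hrev₁ j' hj'1 hj'k (by omega)
          have hst : 2 * s + 1 < 2 * t + 1 := ltA (2 * s + 1) (2 * t + 1) hsl hil (by omega)
          have hAs0 : A (2 * s) = A' (2 * s) :=
            ih (2 * s) (by omega) (by omega) (by omega)
          have hAs1 : A (2 * s + 1) = A' (2 * s + 1) :=
            ih (2 * s + 1) (by omega) (by omega) (by omega)
          obtain ⟨j'', hj''1, hj''k, hsc', hse'⟩ := hA'odd s (by omega)
          have hjj : j'' = j' := injE₁ j'' j' hj''1 hj''k hj'1 hj'k (by omega)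
          subst hjj
          omega
        · have hge' : j' < j := by omega
          have hee : e₁ j < e₁ j' := decE₁ j' j hj'1 hge' hjk
          have hcj : c₁' j < c₁' j' := decC₁' j' j hj'1 hge' hjk
          obtain ⟨s, hsl, hsc, hse⟩ := hrev₁' j hj1 hjk (by omega)
          have hst : 2 * s + 1 < 2 * t + 1 := ltA' (2 * s + 1) (2 * t + 1) hsl hil' (by omega)
          have hAs0 : A (2 * s) = A' (2 * s) :=
            ih (2 * s) (by omega) (by omega) (by omega)
          have hAs1 : A (2 * s + 1) = A' (2 * s + 1) :=
            ih (2 * s + 1) (by omega) (by omega) (by omega)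
          obtain ⟨j'', hj''1, hj''k, hsc', hse'⟩ := hAodd s (by omega)
          have hjj : j'' = j := injE₁ j'' j hj''1 hj''k hj1 hjk (by omega)
          subst hjj
          omega
  have hll' : l = l' := by
    rcases Nat.lt_trichotomy l l' with h | h | h
    · exfalso
      have h1 : A l = A' l := key l le_rfl (by omega)
      have h2 := auxChainLt l' A' hA'mono l l' h le_rfl
      omega
    · exact h
    · exfalso
      have h1 : A l' = A' l' := key l' (by omega) le_rfl
      have h2 := auxChainLt l A hAmono l' l h le_rfl
      omega
  exact ⟨hll', fun i hi => key i hi (by omega)⟩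
end

section
/- A multisegment 𝔪 has width at most k if and only if 𝔪 contains no nested chain Δ₁ ⊆ Δ₂ ⊆ ⋯ ⊆ Δ_{k+1} of k+1 segments (as a sub-multiset). -/
/-! ### Auxiliary material -/

/-- the strict ladder relation -/
abbrev SegLT (Δ₁ Δ₂ : Seg) : Prop := segB Δ₁ < segB Δ₂ ∧ segE Δ₁ < segE Δ₂

instance : IsTrans Seg SegSub := ⟨fun _ _ _ h1 h2 => ⟨le_trans h2.1 h1.1, le_trans h1.2 h2.2⟩⟩
instance : IsTrans Seg SegLT := ⟨fun _ _ _ h1 h2 => ⟨lt_trans h1.1 h2.1, lt_trans h1.2 h2.2⟩⟩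

lemma segSub_refl (x : Seg) : SegSub x x := ⟨le_refl _, le_refl _⟩

lemma seg_ext {x y : Seg} (hb : segB x = segB y) (he : segE x = segE y) : x = y := by
  cases x; cases y; simp only [segB, segE] at hb he
  exact Subtype.ext (Prod.ext hb he)

lemma segSub_antisymm {x y : Seg} (h1 : SegSub x y) (h2 : SegSub y x) : x = y :=
  seg_ext (le_antisymm (h2.1) (h1.1)) (le_antisymm h1.2 h2.2)

lemma seg_trichotomy (x y : Seg) : SegLT x y ∨ SegLT y x ∨ SegSub x y ∨ SegSub y x := by
  unfold SegLT SegSub; omega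

lemma segLT_not_sub {x y : Seg} (h : SegLT x y) : ¬ (SegSub x y ∨ SegSub y x) := by
  unfold SegLT SegSub at *; omega

lemma ladder_nodup {l : List Seg} (h : l.Chain' SegLT) : l.Nodup := by
  refine (List.isChain_iff_pairwise.mp h).imp ?_
  rintro a b ⟨h1, _⟩ rfl; exact lt_irrefl _ h1

/-- Decomposition/pigeonhole: if a multiset of size `> length L` is contained in the sum of `L`,
then some member of `L` shares a sub-multiset of size `≥ 2` with it. -/
lemma pigeon : ∀ (L : List (Multiset Seg)) (s : Multiset Seg), s ≤ L.sum →
    L.length < Multiset.card s →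
    ∃ t ∈ L, ∃ u : Multiset Seg, u ≤ t ∧ u ≤ s ∧ 2 ≤ Multiset.card u := by
  intro L
  induction L with
  | nil =>
      intro s hs hc
      simp only [List.sum_nil, Multiset.le_zero] at hs
      simp [hs] at hc
  | cons t L ih =>
      intro s hs hc
      by_cases h2 : 2 ≤ Multiset.card (s ∩ t)
      · exact ⟨t, List.mem_cons_self, s ∩ t, Multiset.inter_le_right,
          Multiset.inter_le_left, h2⟩
      · have hst : Multiset.card (s ∩ t) + Multiset.card (s - t) = Multiset.card s := by
          rw [← Multiset.card_add]
          congr 1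
          ext a
          simp only [Multiset.count_add, Multiset.count_sub, Multiset.count_inter]
          omega
        have h1 : s - t ≤ L.sum := by
          rw [Multiset.sub_le_iff_le_add]
          simpa [add_comm] using hs
        have hcard : L.length < Multiset.card (s - t) := by
          simp only [List.length_cons] at hc; omega
        obtain ⟨t', ht', u, hu1, hu2, hu3⟩ := ih (s - t) h1 hcard
        exact ⟨t', List.mem_cons_of_mem _ ht', u, hu1,
          le_trans hu2 (Multiset.sub_le_self s t), hu3⟩

/-- one copy of each `⊆`-maximal value occurring in `m` -/
noncomputable def maxSet (m : Multiset Seg) : Multiset Seg :=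
  @Multiset.filter Seg (fun x => ∀ z ∈ m, SegSub x z → x = z) (Classical.decPred _) m.dedup

lemma maxSet_nodup (m : Multiset Seg) : (maxSet m).Nodup := by
  letI := Classical.decPred (fun x : Seg => ∀ z ∈ m, SegSub x z → x = z)
  exact Multiset.Nodup.filter _ (Multiset.nodup_dedup m)

lemma mem_maxSet {m : Multiset Seg} {x : Seg} :
    x ∈ maxSet m ↔ x ∈ m ∧ ∀ z ∈ m, SegSub x z → x = z := by
  letI := Classical.decPred (fun x : Seg => ∀ z ∈ m, SegSub x z → x = z)
  rw [maxSet, Multiset.mem_filter, Multiset.mem_dedup]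

lemma maxSet_le (m : Multiset Seg) : maxSet m ≤ m := by
  classical
  rw [Multiset.le_iff_count]
  intro a
  by_cases ha : a ∈ maxSet m
  · calc Multiset.count a (maxSet m) ≤ 1 :=
          Multiset.nodup_iff_count_le_one.mp (maxSet_nodup m) a
      _ ≤ Multiset.count a m := Multiset.one_le_count_iff_mem.mpr (mem_maxSet.mp ha).1
  · simp [Multiset.count_eq_zero_of_notMem ha]

/-- a linear-type order used to sort the maximal elements -/
noncomputable def segR (x y : Seg) : Prop := toLex x.val ≤ toLex y.val

noncomputable instance : DecidableRel segR := fun _ _ => Classical.dec _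
instance : IsTrans Seg segR := ⟨fun _ _ _ h1 h2 => le_trans h1 h2⟩
instance : IsAntisymm Seg segR :=
  ⟨fun a b h1 h2 => Subtype.ext (by
    have := le_antisymm h1 h2
    exact congrArg ofLex this)⟩
instance : IsTotal Seg segR := ⟨fun a b => le_total (toLex a.val) (toLex b.val)⟩

lemma maxSet_isLadder (m : Multiset Seg) : IsLadder (maxSet m) := by
  classical
  refine ⟨Multiset.sort (maxSet m) segR, (Multiset.sort_eq (maxSet m) segR).symm, ?_⟩
  have hsorted : List.Pairwise segR (Multiset.sort (maxSet m) segR) :=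
    Multiset.pairwise_sort (maxSet m) segR
  have hnd : (Multiset.sort (maxSet m) segR).Nodup := by
    have := maxSet_nodup m
    rwa [← Multiset.sort_eq (maxSet m) segR, Multiset.coe_nodup] at this
  refine List.Pairwise.isChain ?_
  refine (hsorted.and hnd).imp_of_mem ?_
  intro a b ha hb hab
  have ham : a ∈ maxSet m := by
    rw [← Multiset.sort_eq (maxSet m) segR]; exact ha
  have hbm : b ∈ maxSet m := by
    rw [← Multiset.sort_eq (maxSet m) segR]; exact hb
  obtain ⟨ham1, ham2⟩ := mem_maxSet.mp ham
  obtain ⟨hbm1, hbm2⟩ := mem_maxSet.mp hbm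
  have hlt : SegLT a b ∨ SegLT b a := by
    rcases seg_trichotomy a b with h | h | h | h
    · exact Or.inl h
    · exact Or.inr h
    · exact absurd (ham2 b hbm1 h) hab.2
    · exact absurd (hbm2 a ham1 h).symm hab.2
  rcases hlt with h | h
  · exact h
  · exfalso
    have hr := hab.1
    rw [segR, Prod.Lex.le_iff] at hr
    have h1 : segB b < segB a := h.1
    have h2 : segE b < segE a := h.2
    simp only [segB, segE] at h1 h2
    rcases hr with h3 | ⟨h3, h4⟩ <;> simp only [ofLex_toLex] at * <;> omega

/-- Removing the maximal elements reduces the longest nested chain. -/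
lemma no_chain_sub (m : Multiset Seg) (k : ℕ)
    (h : ¬ ∃ l : List Seg, (↑l : Multiset Seg) ≤ m ∧ l.Chain' SegSub ∧ l.length = k + 2) :
    ¬ ∃ l : List Seg, (↑l : Multiset Seg) ≤ m - maxSet m ∧ l.Chain' SegSub ∧
      l.length = k + 1 := by
  classical
  rintro ⟨c, hc, hchain, hlen⟩
  rcases List.eq_nil_or_concat c with rfl | ⟨c', y, rfl⟩
  · simp at hlen
  rw [List.concat_eq_append] at *
  have hpw : List.Pairwise SegSub (c' ++ [y]) := List.isChain_iff_pairwise.mp hchain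
  have hall : ∀ x ∈ c' ++ [y], SegSub x y := by
    intro x hx
    rcases List.mem_append.mp hx with h' | h'
    · exact ((List.pairwise_append.mp hpw).2.2 x h' y (List.mem_singleton_self y))
    · rw [List.mem_singleton.mp h']; exact segSub_refl y
  have hym : y ∈ m - maxSet m := by
    have : y ∈ (↑(c' ++ [y]) : Multiset Seg) := by simp
    exact Multiset.mem_of_le hc this
  have hym' : y ∈ m := Multiset.mem_of_le (Multiset.sub_le_self m (maxSet m)) hym
  rw [Multiset.le_iff_count] at hc
  by_cases hg : ∀ z ∈ m, SegSub y z → y = z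
  · -- y is maximal: extend the chain with a second copy of y
    have hyA : y ∈ maxSet m := mem_maxSet.mpr ⟨hym', hg⟩
    have hcntA : Multiset.count y (maxSet m) = 1 :=
      Multiset.count_eq_one_of_mem (maxSet_nodup m) hyA
    refine h ⟨(c' ++ [y]) ++ [y], ?_, ?_, by simp at hlen ⊢; omega⟩
    · rw [Multiset.le_iff_count]
      intro a
      have h1 := hc a
      have h2 : Multiset.count a (m - maxSet m) =
          Multiset.count a m - Multiset.count a (maxSet m) := Multiset.count_sub a m (maxSet m)
      have h3 : Multiset.count a (maxSet m) ≤ Multiset.count a m :=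
        Multiset.le_iff_count.mp (maxSet_le m) a
      have h4 : ((↑((c' ++ [y]) ++ [y]) : Multiset Seg) : Multiset Seg)
          = (↑(c' ++ [y]) : Multiset Seg) + {y} := by
        rw [← Multiset.coe_singleton, ← Multiset.coe_add]
      rw [h4, Multiset.count_add]
      by_cases hay : a = y
      · subst hay
        rw [Multiset.count_singleton_self]
        omega
      · rw [Multiset.count_singleton, if_neg hay]
        omega
    · refine List.isChain_append.mpr ?_
      refine ⟨hchain, List.isChain_singleton y, ?_⟩
      intro x hx y' hy'
      rw [List.getLast?_concat] at hx
      simp only [Option.mem_def, Option.some.injEq] at hx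
      simp only [List.head?_cons, Option.mem_def, Option.some.injEq] at hy'
      rw [← hx, ← hy']
      exact segSub_refl y
  · -- y is not maximal: extend the chain by a strictly larger segment
    push_neg at hg
    obtain ⟨z, hzm, hyz, hynez⟩ := hg
    have hznotc : z ∉ c' ++ [y] := by
      intro hzc
      exact hynez (segSub_antisymm hyz (hall z hzc))
    refine h ⟨(c' ++ [y]) ++ [z], ?_, ?_, by simp at hlen ⊢; omega⟩
    · rw [Multiset.le_iff_count]
      intro a
      have h1 := hc a
      have h2 : Multiset.count a (m - maxSet m) =
          Multiset.count a m - Multiset.count a (maxSet m) := Multiset.count_sub a m (maxSet m)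
      have h4 : (↑((c' ++ [y]) ++ [z]) : Multiset Seg) = (↑(c' ++ [y]) : Multiset Seg) + {z} := by
        rw [← Multiset.coe_singleton, ← Multiset.coe_add]
      rw [h4, Multiset.count_add]
      by_cases haz : a = z
      · subst haz
        have hc0 : Multiset.count a (↑(c' ++ [y]) : Multiset Seg) = 0 := by
          rw [Multiset.count_eq_zero]
          simpa using hznotc
        have h5 : 1 ≤ Multiset.count a m := Multiset.one_le_count_iff_mem.mpr hzm
        rw [Multiset.count_singleton_self]
        omega
      · rw [Multiset.count_singleton, if_neg haz]
        omega
    · refine List.isChain_append.mpr ?_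
      refine ⟨hchain, List.isChain_singleton z, ?_⟩
      intro x hx y' hy'
      rw [List.getLast?_concat] at hx
      simp only [Option.mem_def, Option.some.injEq] at hx
      simp only [List.head?_cons, Option.mem_def, Option.some.injEq] at hy'
      rw [← hx, ← hy']
      exact hyz

/-- Hard direction: no nested chain of length `k+1` gives a cover by `k` ladders. -/
lemma cover : ∀ (k : ℕ) (m : Multiset Seg),
    (¬ ∃ l : List Seg, (↑l : Multiset Seg) ≤ m ∧ l.Chain' SegSub ∧ l.length = k + 1) →
    ∃ L : List (Multiset Seg), L.length = k ∧ (∀ x ∈ L, IsLadder x) ∧ L.sum = m := by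
  intro k
  induction k with
  | zero =>
      intro m h
      have hm : m = 0 := by
        by_contra h0
        obtain ⟨x, hx⟩ := Multiset.exists_mem_of_ne_zero h0
        exact h ⟨[x], by simpa using hx, List.isChain_singleton x, rfl⟩
      exact ⟨[], rfl, by simp, by simp [hm]⟩
  | succ k ih =>
      intro m h
      obtain ⟨L, hlen, hlad, hsum⟩ := ih (m - maxSet m) (no_chain_sub m k h)
      refine ⟨maxSet m :: L, by simp [hlen], ?_, ?_⟩
      · intro x hx
        rcases List.mem_cons.mp hx with rfl | hx
        · exact maxSet_isLadder m
        · exact hlad x hx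
      · simp only [List.sum_cons, hsum]
        exact add_tsub_cancel_of_le (maxSet_le m)

/-- `ω(𝔪) ≤ k` iff `𝔪` contains no nested chain of `k+1` segments. -/
theorem width_le_iff_no_nested_chain (m : Multiset Seg) (k : ℕ) :
    width m ≤ k ↔
      ¬ ∃ l : List Seg, (↑l : Multiset Seg) ≤ m ∧ l.Chain' SegSub ∧ l.length = k + 1 := by
  constructor
  · intro hw
    rintro ⟨l, hl, hchain, hlen⟩
    -- the defining set of `width` is nonempty (singleton cover)
    have hS : Set.Nonempty
        {k | ∃ L : List (Multiset Seg), L.length = k ∧ (∀ x ∈ L, IsLadder x) ∧ L.sum = m} := by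
      refine ⟨Multiset.card m, m.toList.map (fun x => ({x} : Multiset Seg)), by
        simp [Multiset.length_toList], ?_, ?_⟩
      · intro x hx
        obtain ⟨a, _, rfl⟩ := List.mem_map.mp hx
        exact ⟨[a], rfl, List.isChain_singleton a⟩
      · rw [← Multiset.sum_coe, ← Multiset.map_coe, Multiset.coe_toList,
          Multiset.sum_map_singleton]
    obtain ⟨L, hLlen, hLlad, hLsum⟩ := Nat.sInf_mem hS
    have hLw : L.length = width m := hLlen
    have hcard_l : Multiset.card (↑l : Multiset Seg) = k + 1 := by
      rw [Multiset.coe_card, hlen]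
    have hlcard : L.length < Multiset.card (↑l : Multiset Seg) := by omega
    obtain ⟨t, htL, u, hut, hul, hucard⟩ := pigeon L (↑l) (hLsum ▸ hl) hlcard
    obtain ⟨lad, rfl, hladchain⟩ := hLlad t htL
    -- extract two elements from u
    have hupos : 0 < Multiset.card u := by omega
    obtain ⟨x, hx⟩ := Multiset.card_pos_iff_exists_mem.mp hupos
    obtain ⟨u', rfl⟩ := Multiset.exists_cons_of_mem hx
    have hu'card : 0 < Multiset.card u' := by
      rw [Multiset.card_cons] at hucard; omega
    obtain ⟨y, hy⟩ := Multiset.card_pos_iff_exists_mem.mp hu'card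
    obtain ⟨u'', rfl⟩ := Multiset.exists_cons_of_mem hy
    have hxlad : x ∈ lad := by
      have : x ∈ (↑lad : Multiset Seg) := Multiset.mem_of_le hut (Multiset.mem_cons_self _ _)
      simpa using this
    have hylad : y ∈ lad := by
      have : y ∈ (↑lad : Multiset Seg) :=
        Multiset.mem_of_le hut (Multiset.mem_cons_of_mem (Multiset.mem_cons_self _ _))
      simpa using this
    have hxl : x ∈ l := by
      have : x ∈ (↑l : Multiset Seg) := Multiset.mem_of_le hul (Multiset.mem_cons_self _ _)
      simpa using this
    have hyl : y ∈ l := by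
      have : y ∈ (↑l : Multiset Seg) :=
        Multiset.mem_of_le hul (Multiset.mem_cons_of_mem (Multiset.mem_cons_self _ _))
      simpa using this
    have hchainlad : lad.Chain' SegLT := hladchain
    by_cases hxy : x = y
    · -- two equal copies inside a ladder: contradicts nodup
      subst hxy
      have h2 : 2 ≤ Multiset.count x (↑lad : Multiset Seg) := by
        have := Multiset.le_iff_count.mp hut x
        simp only [Multiset.count_cons_self] at this
        omega
      have h1 : Multiset.count x (↑lad : Multiset Seg) ≤ 1 := by
        have := ladder_nodup hchainlad
        exact Multiset.nodup_iff_count_le_one.mp (by simpa using this) x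
      omega
    · -- two distinct segments both strictly comparable and nested: contradiction
      have hLT : SegLT x y ∨ SegLT y x := by
        have hpw : List.Pairwise (fun a b => SegLT a b ∨ SegLT b a) lad :=
          (List.isChain_iff_pairwise.mp hchainlad).imp Or.inl
        haveI : Std.Symm (fun a b => SegLT a b ∨ SegLT b a) := ⟨fun a b h => h.symm⟩
        exact hpw.forall hxlad hylad hxy
      have hSub : SegSub x y ∨ SegSub y x := by
        have hpw : List.Pairwise (fun a b => SegSub a b ∨ SegSub b a) l :=
          (List.isChain_iff_pairwise.mp hchain).imp Or.inl
        haveI : Std.Symm (fun a b => SegSub a b ∨ SegSub b a) := ⟨fun a b h => h.symm⟩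
        exact hpw.forall hxl hyl hxy
      rcases hLT with h | h
      · exact segLT_not_sub h hSub
      · exact segLT_not_sub h (hSub.symm)
  · intro h
    obtain ⟨L, hlen, hlad, hsum⟩ := cover k m h
    exact Nat.sInf_le ⟨L, hlen, hlad, hsum⟩
end
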